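/- Let L be a finite lattice with a diamond configuration: e < f, and the open interval (e, f) = {x₁, …, xₙ} with n ≥ 2, any two distinct xᵢ, x_j incomparable with xᵢ ⊔ x_j = f and xᵢ ⊓ x_j = e. Let S ⊆ L with S ∩ [e, f] = ∅. Then x₂ − x₃ (for n ≥ 3) lies in the colon ideal (I_L, S) : x₁ in K[L], but x₂ and x₃ individually do not; hence (I_L, S) : x₁ is not generated by I_L together with variables. -/

import Mathlib

open MvPolynomial

/-- The join-meet ideal of a finite lattice `L` in `K[L]`. -/
noncomputable def joinMeetIdeal (K : Type*) [Field K] (L : Type*) [Lattice L] :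
    Ideal (MvPolynomial L K) :=
  Ideal.span {p | ∃ a b : L, ¬ a ≤ b ∧ ¬ b ≤ a ∧
    p = X a * X b - X (a ⊔ b) * X (a ⊓ b)}

/-- The ideal `(I_L, S)` generated by the join-meet ideal together with the
variables in `S`. -/
noncomputable def joinMeetIdealWith (K : Type*) [Field K] (L : Type*) [Lattice L]
    (S : Set L) : Ideal (MvPolynomial L K) :=
  joinMeetIdeal K L ⊔ Ideal.span (X '' S)

lemma joinMeetIdealWith_le_ker {K : Type*} [Field K] {L : Type*} [Lattice L]
    (c : L → K)
    (hmul : ∀ a b : L, ¬ a ≤ b → ¬ b ≤ a → c a * c b = c (a ⊔ b) * c (a ⊓ b))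
    (T : Set L) (hT : ∀ s ∈ T, c s = 0) :
    joinMeetIdealWith K L T ≤ RingHom.ker (aeval c : MvPolynomial L K →ₐ[K] K) := by
  rw [joinMeetIdealWith]
  apply sup_le
  · rw [joinMeetIdeal, Ideal.span_le]
    rintro p ⟨a, b, hab, hba, rfl⟩
    simp [RingHom.mem_ker, hmul a b hab hba]
  · rw [Ideal.span_le]
    rintro p ⟨s, hs, rfl⟩
    simp [RingHom.mem_ker, hT s hs]

theorem colon_not_generated_by_variables {K : Type*} [Field K]
    {L : Type*} [Lattice L] [Fintype L] (e f : L) (hef : e < f)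
    (hpair : ∀ a ∈ Set.Ioo e f, ∀ b ∈ Set.Ioo e f, a ≠ b →
      ¬ a ≤ b ∧ ¬ b ≤ a ∧ a ⊔ b = f ∧ a ⊓ b = e)
    (S : Set L) (hS : S ∩ Set.Icc e f = ∅)
    (x₁ x₂ x₃ : L) (h₁ : x₁ ∈ Set.Ioo e f) (h₂ : x₂ ∈ Set.Ioo e f)
    (h₃ : x₃ ∈ Set.Ioo e f) (h12 : x₁ ≠ x₂) (h13 : x₁ ≠ x₃) (h23 : x₂ ≠ x₃) :
    (X x₂ - X x₃ : MvPolynomial L K) ∈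
        (joinMeetIdealWith K L S).colon ((Ideal.span {(X x₁ : MvPolynomial L K)} : Ideal (MvPolynomial L K)) : Set (MvPolynomial L K)) ∧
      (X x₂ : MvPolynomial L K) ∉
        (joinMeetIdealWith K L S).colon ((Ideal.span {(X x₁ : MvPolynomial L K)} : Ideal (MvPolynomial L K)) : Set (MvPolynomial L K)) ∧
      (X x₃ : MvPolynomial L K) ∉
        (joinMeetIdealWith K L S).colon ((Ideal.span {(X x₁ : MvPolynomial L K)} : Ideal (MvPolynomial L K)) : Set (MvPolynomial L K)) ∧
      ¬ ∃ T : Set L, (joinMeetIdealWith K L S).colon ((Ideal.span {(X x₁ : MvPolynomial L K)} : Ideal (MvPolynomial L K)) : Set (MvPolynomial L K)) =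
        joinMeetIdealWith K L T := by
  classical
  obtain ⟨n12, n21, hs12, hi12⟩ := hpair x₁ h₁ x₂ h₂ h12
  obtain ⟨n13, n31, hs13, hi13⟩ := hpair x₁ h₁ x₃ h₃ h13
  -- Part 1 : membership of X x₂ - X x₃
  have g2 : (X x₁ * X x₂ - X f * X e : MvPolynomial L K) ∈ joinMeetIdeal K L := by
    apply Ideal.subset_span
    exact ⟨x₁, x₂, n12, n21, by rw [hs12, hi12]⟩
  have g3 : (X x₁ * X x₃ - X f * X e : MvPolynomial L K) ∈ joinMeetIdeal K L := by
    apply Ideal.subset_span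
    exact ⟨x₁, x₃, n13, n31, by rw [hs13, hi13]⟩
  have mem1 : (X x₂ - X x₃ : MvPolynomial L K) ∈
      (joinMeetIdealWith K L S).colon ((Ideal.span {(X x₁ : MvPolynomial L K)} : Ideal (MvPolynomial L K)) : Set (MvPolynomial L K)) := by
    rw [Ideal.mem_colon_span_singleton]
    have heq : (X x₂ - X x₃ : MvPolynomial L K) * X x₁ =
        (X x₁ * X x₂ - X f * X e) - (X x₁ * X x₃ - X f * X e) := by ring
    rw [heq]
    exact Ideal.mem_sup_left (Ideal.sub_mem _ g2 g3)
  -- evaluation killing (I_L, S) : indicator of [e,f]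
  set c : L → K := fun v => if v ∈ Set.Icc e f then 1 else 0 with hc
  have hiff : ∀ a b : L, (a ∈ Set.Icc e f ∧ b ∈ Set.Icc e f) ↔
      (a ⊔ b ∈ Set.Icc e f ∧ a ⊓ b ∈ Set.Icc e f) := by
    intro a b
    constructor
    · rintro ⟨ha, hb⟩
      exact ⟨⟨le_trans ha.1 le_sup_left, sup_le ha.2 hb.2⟩,
        ⟨le_inf ha.1 hb.1, le_trans inf_le_left ha.2⟩⟩
    · rintro ⟨hs, hi⟩
      exact ⟨⟨le_trans hi.1 inf_le_left, le_trans le_sup_left hs.2⟩,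
        ⟨le_trans hi.1 inf_le_right, le_trans le_sup_right hs.2⟩⟩
  have hmul : ∀ a b : L, ¬ a ≤ b → ¬ b ≤ a → c a * c b = c (a ⊔ b) * c (a ⊓ b) := by
    intro a b _ _
    have key : ∀ u v : L, (if u ∈ Set.Icc e f then (1 : K) else 0) *
        (if v ∈ Set.Icc e f then 1 else 0) =
        if u ∈ Set.Icc e f ∧ v ∈ Set.Icc e f then 1 else 0 := by
      intro u v
      by_cases hu : u ∈ Set.Icc e f <;> by_cases hv : v ∈ Set.Icc e f <;>
        simp [hu, hv]
    simp only [hc, key]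
    exact if_congr (hiff a b) rfl rfl
  have hTS : ∀ s ∈ S, c s = 0 := fun s hs =>
    if_neg (fun h => Set.eq_empty_iff_forall_notMem.mp hS s ⟨hs, h⟩)
  have hker := joinMeetIdealWith_le_ker c hmul S hTS
  have hc1 : c x₁ = 1 := if_pos (Set.Ioo_subset_Icc_self h₁)
  have hc2 : c x₂ = 1 := if_pos (Set.Ioo_subset_Icc_self h₂)
  have hc3 : c x₃ = 1 := if_pos (Set.Ioo_subset_Icc_self h₃)
  have notmem2 : (X x₂ : MvPolynomial L K) ∉
      (joinMeetIdealWith K L S).colon ((Ideal.span {(X x₁ : MvPolynomial L K)} : Ideal (MvPolynomial L K)) : Set (MvPolynomial L K)) := by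
    intro hmem
    rw [Ideal.mem_colon_span_singleton] at hmem
    have := hker hmem
    rw [RingHom.mem_ker] at this
    simp [hc2, hc1] at this
  have notmem3 : (X x₃ : MvPolynomial L K) ∉
      (joinMeetIdealWith K L S).colon ((Ideal.span {(X x₁ : MvPolynomial L K)} : Ideal (MvPolynomial L K)) : Set (MvPolynomial L K)) := by
    intro hmem
    rw [Ideal.mem_colon_span_singleton] at hmem
    have := hker hmem
    rw [RingHom.mem_ker] at this
    simp [hc3, hc1] at this
  refine ⟨mem1, notmem2, notmem3, ?_⟩
  rintro ⟨T, hTeq⟩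
  by_cases hx2T : x₂ ∈ T
  · exact notmem2 (hTeq ▸ Ideal.mem_sup_right (Ideal.subset_span ⟨x₂, hx2T, rfl⟩))
  · set c₂ : L → K := fun v => if v = x₂ then 1 else 0 with hc₂
    have hmul₂ : ∀ a b : L, ¬ a ≤ b → ¬ b ≤ a → c₂ a * c₂ b = c₂ (a ⊔ b) * c₂ (a ⊓ b) := by
      intro a b hab hba
      have hne : a ≠ b := fun h => hab (h ▸ le_refl a)
      have hne2 : a ⊔ b ≠ x₂ ∨ a ⊓ b ≠ x₂ := by
        by_contra h
        push_neg at h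
        exact hab (le_trans (le_trans le_sup_left (le_of_eq (h.1.trans h.2.symm)))
          inf_le_right)
      have lhs0 : c₂ a * c₂ b = 0 := by
        rcases eq_or_ne a x₂ with h | h
        · have : b ≠ x₂ := fun hb => hne (h.trans hb.symm)
          simp [hc₂, this]
        · simp [hc₂, h]
      have rhs0 : c₂ (a ⊔ b) * c₂ (a ⊓ b) = 0 := by
        rcases hne2 with h | h <;> simp [hc₂, h]
      rw [lhs0, rhs0]
    have hTz : ∀ s ∈ T, c₂ s = 0 := fun s hs => by
      have : s ≠ x₂ := fun h => hx2T (h ▸ hs)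
      simp [hc₂, this]
    have hker₂ := joinMeetIdealWith_le_ker c₂ hmul₂ T hTz
    have hmem : (X x₂ - X x₃ : MvPolynomial L K) ∈ joinMeetIdealWith K L T :=
      hTeq ▸ mem1
    have := hker₂ hmem
    rw [RingHom.mem_ker] at this
    simp [hc₂, h23.symm] at this
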